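/- Let x* be a global minimizer of E(x) = ‖x‖₁ - α‖x‖₂ + l(x), where l has L-Lipschitz gradient. Then for every 0 < λ < 1/L, x* is a fixed point of the forward-backward operator: x* ∈ prox_{λ r_α}(x* - λ∇l(x*)). -/

import Mathlib

open Finset Filter Set
open scoped RealInnerProductSpace

noncomputable def norm1 {N : ℕ} (x : EuclideanSpace ℝ (Fin N)) : ℝ := ∑ i, |x i|

noncomputable def normInf {N : ℕ} (x : EuclideanSpace ℝ (Fin N)) : ℝ := ⨆ i, |x i|

noncomputable def Fobj {N : ℕ} (a lam : ℝ) (y x : EuclideanSpace ℝ (Fin N)) : ℝ :=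
  norm1 x - a * ‖x‖ + 1 / (2 * lam) * ‖x - y‖ ^ 2

lemma descent_aux {E : Type*} [NormedAddCommGroup E] [InnerProductSpace ℝ E] [CompleteSpace E]
    {L : ℝ} (hL : 0 ≤ L) (l : E → ℝ) (g : E → E)
    (hg : ∀ z, HasGradientAt l (g z) z)
    (hLip : ∀ z w, ‖g z - g w‖ ≤ L * ‖z - w‖) (x v : E) :
    l (x + v) ≤ l x + ⟪g x, v⟫ + L / 2 * ‖v‖ ^ 2 := by
  set h : ℝ → ℝ := fun t => l (x + t • v) - t * ⟪g x, v⟫ - t ^ 2 * (L / 2 * ‖v‖ ^ 2) with hh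
  have hc : ∀ t : ℝ, HasDerivAt (fun s : ℝ => x + s • v) v t := by
    intro t
    simpa using ((hasDerivAt_id t).smul_const v).const_add x
  have hd : ∀ t : ℝ,
      HasDerivAt h (⟪g (x + t • v), v⟫ - ⟪g x, v⟫ - 2 * t * (L / 2 * ‖v‖ ^ 2)) t := by
    intro t
    have h1 : HasDerivAt (fun s : ℝ => l (x + s • v)) (⟪g (x + t • v), v⟫) t := by
      have := ((hg (x + t • v)).hasFDerivAt.comp_hasDerivAt t (hc t))
      simp only [InnerProductSpace.toDual_apply_apply] at this
      exact this
    have h2 : HasDerivAt (fun s : ℝ => s * ⟪g x, v⟫) (⟪g x, v⟫) t := by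
      simpa using (hasDerivAt_id t).mul_const (⟪g x, v⟫)
    have h3 : HasDerivAt (fun s : ℝ => s ^ 2 * (L / 2 * ‖v‖ ^ 2))
        (2 * t * (L / 2 * ‖v‖ ^ 2)) t := by
      have := (hasDerivAt_pow 2 t).mul_const (L / 2 * ‖v‖ ^ 2)
      refine this.congr_deriv ?_
      norm_num
    exact (h1.sub h2).sub h3
  have hmono : AntitoneOn h (Set.Icc (0 : ℝ) 1) := by
    apply antitoneOn_of_deriv_nonpos (convex_Icc 0 1)
    · exact fun t _ => ((hd t).continuousAt).continuousWithinAt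
    · intro t ht
      exact ((hd t).differentiableAt).differentiableWithinAt
    · intro t ht
      rw [interior_Icc] at ht
      rw [(hd t).deriv]
      have hb : ⟪g (x + t • v) - g x, v⟫ ≤ L * t * ‖v‖ ^ 2 := by
        calc ⟪g (x + t • v) - g x, v⟫ ≤ ‖g (x + t • v) - g x‖ * ‖v‖ :=
              real_inner_le_norm _ _
          _ ≤ (L * ‖(x + t • v) - x‖) * ‖v‖ := by
              gcongr; exact hLip _ _
          _ = L * t * ‖v‖ ^ 2 := by
              rw [add_sub_cancel_left, norm_smul, Real.norm_eq_abs,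
                abs_of_pos ht.1]
              ring
      have := inner_sub_left (𝕜 := ℝ) (g (x + t • v)) (g x) v
      nlinarith [hb]
  have h10 : h 1 ≤ h 0 := hmono (by norm_num) (by norm_num) (by norm_num)
  simp only [hh, one_smul, zero_smul, add_zero, one_pow, one_mul, zero_mul,
    sub_zero] at h10
  nlinarith [h10]

theorem stmt11 {N : ℕ} (a L : ℝ) (ha : 0 ≤ a) (hL : 0 < L)
    (l : EuclideanSpace ℝ (Fin N) → ℝ)
    (g : EuclideanSpace ℝ (Fin N) → EuclideanSpace ℝ (Fin N))
    (hg : ∀ z, HasGradientAt l (g z) z)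
    (hLip : ∀ z w, ‖g z - g w‖ ≤ L * ‖z - w‖)
    (xs : EuclideanSpace ℝ (Fin N))
    (hmin : ∀ z, norm1 xs - a * ‖xs‖ + l xs ≤ norm1 z - a * ‖z‖ + l z) :
    ∀ lam : ℝ, 0 < lam → lam < 1 / L →
      IsMinOn (Fobj a lam (xs - lam • g xs)) Set.univ xs := by
  intro lam hlam hlamL
  intro z _
  simp only [Fobj]
  set y := xs - lam • g xs with hy
  have hxy : xs - y = lam • g xs := by simp [hy]
  have hzy : z - y = (z - xs) + lam • g xs := by
    simp [hy]; abel
  have hnxy : ‖xs - y‖ ^ 2 = lam ^ 2 * ‖g xs‖ ^ 2 := by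
    rw [hxy, norm_smul, Real.norm_eq_abs, abs_of_pos hlam, mul_pow]
  have hnzy : ‖z - y‖ ^ 2 =
      ‖z - xs‖ ^ 2 + 2 * ⟪z - xs, lam • g xs⟫ + lam ^ 2 * ‖g xs‖ ^ 2 := by
    rw [hzy, norm_add_sq_real, norm_smul, Real.norm_eq_abs, abs_of_pos hlam, mul_pow]
  have hinner : ⟪z - xs, lam • g xs⟫ = lam * ⟪g xs, z - xs⟫ := by
    rw [real_inner_smul_right, real_inner_comm]
  -- descent lemma
  have hdesc : l z ≤ l xs + ⟪g xs, z - xs⟫ + L / 2 * ‖z - xs‖ ^ 2 := by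
    simpa using descent_aux hL.le l g hg hLip xs (z - xs)
  have hmin' := hmin z
  have hLlam : L * lam < 1 := by
    rw [lt_div_iff₀ hL] at hlamL
    linarith [hlamL]
  have hinv : L / 2 ≤ 1 / (2 * lam) := by
    rw [div_le_div_iff₀ (by norm_num) (by positivity)]
    nlinarith
  have hpos : (0:ℝ) < 1 / (2 * lam) := by positivity
  have hsq : (0:ℝ) ≤ ‖z - xs‖ ^ 2 := sq_nonneg _
  simp only [Set.mem_setOf_eq]
  rw [hnxy, hnzy, hinner]
  have key : norm1 xs - a * ‖xs‖ ≤
      norm1 z - a * ‖z‖ + 1 / (2 * lam) * ‖z - xs‖ ^ 2 + ⟪g xs, z - xs⟫ := by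
    nlinarith
  have hexp : 1 / (2 * lam) * (2 * (lam * ⟪g xs, z - xs⟫)) = ⟪g xs, z - xs⟫ := by
    field_simp
  nlinarith [key, hpos, hexp]
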